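/- Contact-improvement lemma: assume every H_i has zero constant coefficient and J₀^p = 0 for some p ≥ 1. Write Φ for the map sending a vector Y of power series in z with zero constant coefficients to (H_1(z,Y),…,H_m(z,Y)) (each component again has zero constant coefficient, so Φ can be iterated). If A and B are two vectors of power series in z with zero constant coefficients such that A_i ≡ B_i mod z^{k+1} for every i, then Φ^p(A)_i ≡ Φ^p(B)_i mod z^{k+2} for every i, where Φ^p denotes the p-fold iterate of Φ. -/

import Mathlib

/-- Substitution of a family `s` of one-variable formal power series (each intended to have
zero constant coefficient) into a multivariate formal power series `H` in `k` variables: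
the coefficient of `z^n` in `H(s)` is the (finite) sum over all monomials `d` of the
coefficient of `d` in `H` times the coefficient of `z^n` in `∏ j, (s j) ^ (d j)`.
When every `s j` has zero constant coefficient, only monomials `d` with
`∑ j, d j ≤ n` (in particular `d ≤ (n, …, n)`) can contribute, so this is the usual
well-defined substitution. -/
noncomputable def mvSubst {R : Type*} [CommSemiring R] {k : ℕ}
    (H : MvPowerSeries (Fin k) R) (s : Fin k → PowerSeries R) : PowerSeries R :=
  PowerSeries.mk fun n =>
    ∑ d ∈ Finset.Iic (Finsupp.equivFunOnFinite.symm fun _ : Fin k => n),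
      MvPowerSeries.coeff d H * PowerSeries.coeff n (∏ j, (s j) ^ (d j))


section Aux

open PowerSeries Finset

lemma pow_sub_pow_dvd' {R : Type*} [CommRing R] (c : ℕ) (s t : PowerSeries R)
    (hs : (PowerSeries.X : PowerSeries R) ∣ s)
    (hst : (PowerSeries.X : PowerSeries R) ^ (c + 1) ∣ s - t) (d : ℕ) :
    (PowerSeries.X : PowerSeries R) ^ (c + d) ∣ s ^ d - t ^ d := by
  induction d with
  | zero => simpa using dvd_zero _
  | succ d ih =>
    have he : s ^ (d + 1) - t ^ (d + 1) = s * (s ^ d - t ^ d) + (s - t) * t ^ d := by ring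
    have ht : (PowerSeries.X : PowerSeries R) ∣ t := by
      have : t = s - (s - t) := by ring
      rw [this]
      exact dvd_sub hs (dvd_trans (dvd_pow_self _ (Nat.succ_ne_zero c)) hst)
    rw [he]
    refine dvd_add ?_ ?_
    · have h1 := mul_dvd_mul hs ih
      have : (PowerSeries.X : PowerSeries R) ^ (c + (d + 1)) = X * X ^ (c + d) := by ring
      rw [this]; exact h1
    · have h1 := mul_dvd_mul hst (pow_dvd_pow_of_dvd ht d)
      have : (PowerSeries.X : PowerSeries R) ^ (c + (d + 1)) = X ^ (c + 1) * X ^ d := by ring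
      rw [this]; exact h1

lemma prod_pow_dvd {R : Type*} [CommRing R] {ι : Type*} [Fintype ι] [DecidableEq ι]
    (t : ι → PowerSeries R) (ht : ∀ j, (PowerSeries.X : PowerSeries R) ∣ t j)
    (d : ι → ℕ) (u : Finset ι) :
    (PowerSeries.X : PowerSeries R) ^ (∑ j ∈ u, d j) ∣ ∏ j ∈ u, t j ^ d j := by
  rw [← Finset.prod_pow_eq_pow_sum]
  exact Finset.prod_dvd_prod_of_dvd _ _ fun j _ => pow_dvd_pow_of_dvd (ht j) (d j)

lemma prod_pow_sub_dvd {R : Type*} [CommRing R] {ι : Type*} [Fintype ι] [DecidableEq ι]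
    (c : ℕ) (s t : ι → PowerSeries R)
    (hs : ∀ j, (PowerSeries.X : PowerSeries R) ∣ s j)
    (ht : ∀ j, (PowerSeries.X : PowerSeries R) ∣ t j)
    (hst : ∀ j, (PowerSeries.X : PowerSeries R) ^ (c + 1) ∣ s j - t j) (d : ι → ℕ) :
    (PowerSeries.X : PowerSeries R) ^ (c + ∑ j, d j) ∣
      ∏ j, s j ^ d j - ∏ j, t j ^ d j := by
  classical
  induction (Finset.univ : Finset ι) using Finset.induction with
  | empty => simpa using dvd_zero _
  | @insert a u hnot ih =>
    rw [Finset.prod_insert hnot, Finset.prod_insert hnot, Finset.sum_insert hnot]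
    have he : s a ^ d a * ∏ j ∈ u, s j ^ d j - t a ^ d a * ∏ j ∈ u, t j ^ d j
        = (s a ^ d a - t a ^ d a) * ∏ j ∈ u, s j ^ d j
          + t a ^ d a * (∏ j ∈ u, s j ^ d j - ∏ j ∈ u, t j ^ d j) := by ring
    rw [he]
    refine dvd_add ?_ ?_
    · have h1 := mul_dvd_mul (pow_sub_pow_dvd' c (s a) (t a) (hs a) (hst a) (d a))
        (prod_pow_dvd s hs d u)
      have : (PowerSeries.X : PowerSeries R) ^ (c + (d a + ∑ j ∈ u, d j))
          = X ^ (c + d a) * X ^ (∑ j ∈ u, d j) := by ring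
      rw [this]; exact h1
    · have h1 := mul_dvd_mul (pow_dvd_pow_of_dvd (ht a) (d a)) ih
      have : (PowerSeries.X : PowerSeries R) ^ (c + (d a + ∑ j ∈ u, d j))
          = X ^ (d a) * X ^ (c + ∑ j ∈ u, d j) := by ring
      rw [this]; exact h1

lemma finsupp_eq_zero_of_sum {ι : Type*} [Fintype ι] (d : ι →₀ ℕ)
    (h : ∑ l, d l = 0) : d = 0 := by
  ext l
  exact Finset.sum_eq_zero_iff.mp h l (Finset.mem_univ l)

lemma finsupp_eq_single_of_sum_one {ι : Type*} [Fintype ι] [DecidableEq ι] (d : ι →₀ ℕ)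
    (h : ∑ l, d l = 1) : ∃ l, d = Finsupp.single l 1 := by
  obtain ⟨l, -, hl⟩ : ∃ l ∈ Finset.univ, d l ≠ 0 := by
    by_contra h'
    push_neg at h'
    rw [Finset.sum_eq_zero fun l hl => h' l hl] at h
    simp at h
  have h2 : d l + ∑ x ∈ Finset.univ.erase l, d x = 1 :=
    (Finset.add_sum_erase _ _ (Finset.mem_univ l)).trans h
  have hdl : d l = 1 := by omega
  have hrest : ∑ x ∈ Finset.univ.erase l, d x = 0 := by omega
  refine ⟨l, ?_⟩
  ext x
  rcases eq_or_ne x l with rfl | hx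
  · rw [Finsupp.single_eq_same]; exact hdl
  · rw [Finsupp.single_apply, if_neg (Ne.symm hx)]
    exact Finset.sum_eq_zero_iff.mp hrest x (Finset.mem_erase.mpr ⟨hx, Finset.mem_univ x⟩)

lemma prod_pow_single {M : Type*} [CommMonoid M] {ι : Type*} [Fintype ι] [DecidableEq ι]
    (s : ι → M) (a : ι) : ∏ l, s l ^ (Finsupp.single a (1:ℕ)) l = s a := by
  rw [Finset.prod_eq_single a]
  · simp
  · intro l _ hl
    simp [Finsupp.single_apply, Ne.symm hl]
  · simp

lemma mvSubst_contact {R : Type*} [CommRing R] {m : ℕ}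
    (Hi : MvPowerSeries (Fin (m+1)) R) (k : ℕ) (A B : Fin m → PowerSeries R)
    (hA0 : ∀ i, PowerSeries.constantCoeff (A i) = 0)
    (hB0 : ∀ i, PowerSeries.constantCoeff (B i) = 0)
    (hAB : ∀ i, ∀ n ≤ k, PowerSeries.coeff n (A i) = PowerSeries.coeff n (B i)) :
    (∀ n ≤ k, PowerSeries.coeff n (mvSubst Hi (Fin.cons PowerSeries.X A)) =
       PowerSeries.coeff n (mvSubst Hi (Fin.cons PowerSeries.X B))) ∧
    (PowerSeries.coeff (k+1) (mvSubst Hi (Fin.cons PowerSeries.X A)) -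
     PowerSeries.coeff (k+1) (mvSubst Hi (Fin.cons PowerSeries.X B)) =
     ∑ j, MvPowerSeries.coeff (Finsupp.single (Fin.succ j) 1) Hi *
       (PowerSeries.coeff (k+1) (A j) - PowerSeries.coeff (k+1) (B j))) := by
  classical
  have hsA : ∀ l : Fin (m+1), (PowerSeries.X : PowerSeries R) ∣ (Fin.cons PowerSeries.X A : Fin (m+1) → PowerSeries R) l := by
    intro l
    cases l using Fin.cases with
    | zero => simp
    | succ j =>
      rw [Fin.cons_succ]
      exact PowerSeries.X_dvd_iff.mpr (hA0 j)
  have hsB : ∀ l : Fin (m+1), (PowerSeries.X : PowerSeries R) ∣ (Fin.cons PowerSeries.X B : Fin (m+1) → PowerSeries R) l := by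
    intro l
    cases l using Fin.cases with
    | zero => simp
    | succ j =>
      rw [Fin.cons_succ]
      exact PowerSeries.X_dvd_iff.mpr (hB0 j)
  have hst : ∀ l : Fin (m+1), (PowerSeries.X : PowerSeries R) ^ (k + 1) ∣
      (Fin.cons PowerSeries.X A : Fin (m+1) → PowerSeries R) l - (Fin.cons PowerSeries.X B : Fin (m+1) → PowerSeries R) l := by
    intro l
    cases l using Fin.cases with
    | zero => simp
    | succ j =>
      rw [Fin.cons_succ, Fin.cons_succ]
      refine PowerSeries.X_pow_dvd_iff.mpr fun n hn => ?_
      rw [map_sub, hAB j n (Nat.lt_succ_iff.mp hn), sub_self]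
  have hcoeff : ∀ (n : ℕ) (d : Fin (m+1) →₀ ℕ), n < k + ∑ l, d l →
      PowerSeries.coeff n (∏ l, (Fin.cons PowerSeries.X A : Fin (m+1) → PowerSeries R) l ^ d l) =
      PowerSeries.coeff n (∏ l, (Fin.cons PowerSeries.X B : Fin (m+1) → PowerSeries R) l ^ d l) := by
    intro n d hn
    have hd := prod_pow_sub_dvd k (Fin.cons PowerSeries.X A) (Fin.cons PowerSeries.X B)
      hsA hsB hst (fun l => d l)
    rw [PowerSeries.X_pow_dvd_iff] at hd
    have h := hd n hn
    rwa [map_sub, sub_eq_zero] at h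
  constructor
  · intro n hn
    rw [mvSubst, mvSubst, PowerSeries.coeff_mk, PowerSeries.coeff_mk]
    refine Finset.sum_congr rfl fun d _ => ?_
    congr 1
    rcases eq_or_ne d 0 with rfl | hd0
    · simp
    · refine hcoeff n d ?_
      have : ∑ l, d l ≠ 0 := fun h => hd0 (finsupp_eq_zero_of_sum d h)
      omega
  · rw [mvSubst, mvSubst, PowerSeries.coeff_mk, PowerSeries.coeff_mk,
      ← Finset.sum_sub_distrib]
    simp_rw [← mul_sub]
    set T : Finset (Fin (m+1) →₀ ℕ) :=
      Finset.image (fun j : Fin m => Finsupp.single (Fin.succ j) (1:ℕ)) Finset.univ with hT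
    have hTsub : T ⊆ Finset.Iic (Finsupp.equivFunOnFinite.symm fun _ : Fin (m+1) => k+1) := by
      intro d hd
      rw [hT, Finset.mem_image] at hd
      obtain ⟨j, -, rfl⟩ := hd
      rw [Finset.mem_Iic, Finsupp.le_def]
      intro l
      rw [Finsupp.single_apply]
      have : (Finsupp.equivFunOnFinite.symm fun _ : Fin (m+1) => k+1) l = k+1 := rfl
      rw [this]
      split <;> omega
    have hvanish : ∀ d ∈ Finset.Iic (Finsupp.equivFunOnFinite.symm fun _ : Fin (m+1) => k+1),
        d ∉ T → MvPowerSeries.coeff d Hi *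
          (PowerSeries.coeff (k+1) (∏ l, (Fin.cons PowerSeries.X A : Fin (m+1) → PowerSeries R) l ^ d l) -
           PowerSeries.coeff (k+1) (∏ l, (Fin.cons PowerSeries.X B : Fin (m+1) → PowerSeries R) l ^ d l)) = 0 := by
      intro d _ hdT
      suffices h : PowerSeries.coeff (k+1) (∏ l, (Fin.cons PowerSeries.X A : Fin (m+1) → PowerSeries R) l ^ d l) =
          PowerSeries.coeff (k+1) (∏ l, (Fin.cons PowerSeries.X B : Fin (m+1) → PowerSeries R) l ^ d l) by
        rw [h, sub_self, mul_zero]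
      rcases Nat.lt_or_ge (∑ l, d l) 2 with h2 | h2
      · interval_cases hE : (∑ l, d l)
        · rw [finsupp_eq_zero_of_sum d hE]
          simp
        · obtain ⟨l, rfl⟩ := finsupp_eq_single_of_sum_one d hE
          revert hdT
          refine Fin.cases ?_ ?_ l
          · intro _
            rw [prod_pow_single, prod_pow_single, Fin.cons_zero, Fin.cons_zero]
          · intro j hdT
            exact absurd (Finset.mem_image.mpr ⟨j, Finset.mem_univ j, rfl⟩) hdT
      · exact hcoeff (k+1) d (by omega)
    rw [← Finset.sum_subset hTsub hvanish, hT,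
      Finset.sum_image (fun j _ j' _ h =>
        Fin.succ_injective m (Finsupp.single_left_injective one_ne_zero h))]
    refine Finset.sum_congr rfl fun j _ => ?_
    rw [prod_pow_single, prod_pow_single, Fin.cons_succ, Fin.cons_succ]

end Aux

/-- **Contact-improvement lemma.**  If every `H i` has zero constant coefficient and the
Jacobian matrix at the origin satisfies `J₀ ^ p = 0` for some `p ≥ 1`, and if `Φ` is the map
sending a vector `Y` of power series to `(H 1 (z,Y), …, H m (z,Y))`, then from a contact of
order `k` (coefficients agree in all degrees `n ≤ k`) between `A` and `B`, the `p`-fold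
iterates `Φ^[p] A` and `Φ^[p] B` have contact of order `k + 1`. -/
theorem contact_improvement {R : Type*} [CommRing R] {m : ℕ} (hm : 1 ≤ m)
    (H : Fin m → MvPowerSeries (Fin (m + 1)) R)
    (hH0 : ∀ i, MvPowerSeries.coeff 0 (H i) = 0)
    (p : ℕ) (hp : 1 ≤ p)
    (hJp : (Matrix.of fun i j : Fin m =>
      MvPowerSeries.coeff (Finsupp.single j.succ 1) (H i)) ^ p = 0)
    (Φ : (Fin m → PowerSeries R) → (Fin m → PowerSeries R))
    (hΦ : ∀ Y i, Φ Y i = mvSubst (H i) (Fin.cons PowerSeries.X Y))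
    (k : ℕ) (A B : Fin m → PowerSeries R)
    (hA0 : ∀ i, PowerSeries.constantCoeff (A i) = 0)
    (hB0 : ∀ i, PowerSeries.constantCoeff (B i) = 0)
    (hAB : ∀ i, ∀ n ≤ k, PowerSeries.coeff n (A i) = PowerSeries.coeff n (B i)) :
    ∀ i, ∀ n ≤ k + 1, PowerSeries.coeff n (Φ^[p] A i) = PowerSeries.coeff n (Φ^[p] B i) := by
  classical
  set Jm : Matrix (Fin m) (Fin m) R := Matrix.of fun i j : Fin m =>
    MvPowerSeries.coeff (Finsupp.single j.succ 1) (H i) with hJm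
  set v : Fin m → R := fun j =>
    PowerSeries.coeff (k+1) (A j) - PowerSeries.coeff (k+1) (B j) with hv
  have hconst : ∀ (Y : Fin m → PowerSeries R) i,
      PowerSeries.constantCoeff (Φ Y i) = 0 := by
    intro Y i
    rw [hΦ, mvSubst, ← PowerSeries.coeff_zero_eq_constantCoeff, PowerSeries.coeff_mk]
    refine Finset.sum_eq_zero fun d hd => ?_
    have hd0 : d = 0 := by
      have hle := Finsupp.le_def.mp (Finset.mem_Iic.mp hd)
      ext l
      simpa using Nat.le_zero.mp (hle l)
    rw [hd0, hH0 i, zero_mul]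
  have key : ∀ t : ℕ,
      (∀ i, PowerSeries.constantCoeff (Φ^[t] A i) = 0) ∧
      (∀ i, PowerSeries.constantCoeff (Φ^[t] B i) = 0) ∧
      (∀ i, ∀ n ≤ k, PowerSeries.coeff n (Φ^[t] A i) = PowerSeries.coeff n (Φ^[t] B i)) ∧
      (∀ i, PowerSeries.coeff (k+1) (Φ^[t] A i) - PowerSeries.coeff (k+1) (Φ^[t] B i)
        = (Matrix.mulVec (Jm ^ t) v) i) := by
    intro t
    induction t with
    | zero =>
      refine ⟨hA0, hB0, hAB, fun i => ?_⟩
      simp [hv]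
    | succ t ih =>
      obtain ⟨ihA0, ihB0, ihAB, ihv⟩ := ih
      have hstep := fun i => mvSubst_contact (H i) k (Φ^[t] A) (Φ^[t] B) ihA0 ihB0 ihAB
      refine ⟨fun i => ?_, fun i => ?_, fun i n hn => ?_, fun i => ?_⟩
      · rw [Function.iterate_succ_apply']; exact hconst _ i
      · rw [Function.iterate_succ_apply']; exact hconst _ i
      · rw [Function.iterate_succ_apply', Function.iterate_succ_apply', hΦ, hΦ]
        exact (hstep i).1 n hn
      · rw [Function.iterate_succ_apply', Function.iterate_succ_apply', hΦ, hΦ,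
          (hstep i).2]
        have h1 : ∀ j, PowerSeries.coeff (k+1) (Φ^[t] A j)
            - PowerSeries.coeff (k+1) (Φ^[t] B j) = (Matrix.mulVec (Jm ^ t) v) j := ihv
        calc ∑ j, MvPowerSeries.coeff (Finsupp.single (Fin.succ j) 1) (H i) *
              (PowerSeries.coeff (k+1) (Φ^[t] A j) - PowerSeries.coeff (k+1) (Φ^[t] B j))
            = ∑ j, Jm i j * (Matrix.mulVec (Jm ^ t) v) j := by
              refine Finset.sum_congr rfl fun j _ => ?_
              rw [h1 j, hJm]
              rfl
          _ = (Matrix.mulVec Jm (Matrix.mulVec (Jm ^ t) v)) i := rfl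
          _ = (Matrix.mulVec (Jm * Jm ^ t) v) i := by rw [Matrix.mulVec_mulVec]
          _ = (Matrix.mulVec (Jm ^ (t+1)) v) i := by rw [← pow_succ']
  intro i n hn
  rcases Nat.lt_or_eq_of_le hn with h | rfl
  · exact (key p).2.2.1 i n (Nat.lt_succ_iff.mp h)
  · have h2 := (key p).2.2.2 i
    rw [hJp, Matrix.zero_mulVec] at h2
    exact sub_eq_zero.mp h2
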